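/- Let S ⊂ R^n be a linear subspace and Ω ⊂ R^n a closed convex set, f : R^n → R differentiable, γ > 0. Suppose x ∈ R^n minimizes z ↦ (1/(2γ))‖z − w‖² + g(z) over R^n, where g(z) = λ‖z‖₀ + λ₀‖Bz‖₀ + δ_Ω(z) and w := y − γ∇f(y), and suppose every z ∈ S ∩ Ω satisfies g(z) ≤ g(x) (e.g., because S = S(x) as defined via joint supports). If x ∈ S ∩ Ω, then x = proj_{S ∩ Ω}(w), the Euclidean projection of w onto S ∩ Ω. -/

import Mathlib

/-- a proximal point whose value dominates `g` on `S ∩ Ω` and lies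
in `S ∩ Ω` is the projection of the forward point onto `S ∩ Ω`. -/
theorem prox_is_projection (n : ℕ)
    (S : Submodule ℝ (EuclideanSpace ℝ (Fin n)))
    (Ω : Set (EuclideanSpace ℝ (Fin n))) (hΩc : IsClosed Ω) (hΩconv : Convex ℝ Ω)
    (f : EuclideanSpace ℝ (Fin n) → ℝ)
    (gradf : EuclideanSpace ℝ (Fin n) → EuclideanSpace ℝ (Fin n))
    (γ : ℝ) (hγ : 0 < γ)
    (hgrad : ∀ v, HasGradientAt f (gradf v) v)
    (g : EuclideanSpace ℝ (Fin n) → EReal)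
    (y x w : EuclideanSpace ℝ (Fin n)) (hw : w = y - γ • gradf y)
    (hgx : g x ≠ ⊤) (hgbot : ∀ z, g z ≠ ⊥)
    (hopt : ∀ z, ((1 / (2 * γ) * ‖x - w‖ ^ 2 : ℝ) : EReal) + g x
      ≤ ((1 / (2 * γ) * ‖z - w‖ ^ 2 : ℝ) : EReal) + g z)
    (hgle : ∀ z ∈ (S : Set (EuclideanSpace ℝ (Fin n))) ∩ Ω, g z ≤ g x)
    (hxS : x ∈ (S : Set (EuclideanSpace ℝ (Fin n))) ∩ Ω) :
    ∀ u ∈ (S : Set (EuclideanSpace ℝ (Fin n))) ∩ Ω, u ≠ x → ‖x - w‖ < ‖u - w‖ := by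
  intro u hu hne
  by_contra h
  push_neg at h
  -- midpoint
  set m : EuclideanSpace ℝ (Fin n) := (1/2 : ℝ) • x + (1/2 : ℝ) • u with hm
  have hmS : m ∈ (S : Set (EuclideanSpace ℝ (Fin n))) :=
    S.add_mem (S.smul_mem _ hxS.1) (S.smul_mem _ hu.1)
  have hmΩ : m ∈ Ω := by
    have := hΩconv hxS.2 hu.2 (by norm_num : (0:ℝ) ≤ 1/2) (by norm_num : (0:ℝ) ≤ 1/2)
      (by norm_num)
    simpa [hm, show (1/2:ℝ) = 2⁻¹ by norm_num] using this
  -- strict decrease of squared distance at the midpoint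
  have hxu : x - u ≠ 0 := sub_ne_zero.mpr (Ne.symm hne)
  have hxu' : 0 < ‖x - u‖ ^ 2 := pow_pos (norm_pos_iff.mpr hxu) 2
  have hmw : m - w = (1/2 : ℝ) • ((x - w) + (u - w)) := by
    rw [hm]; module
  have hpar : ‖(x - w) + (u - w)‖ ^ 2 + ‖(x - w) - (u - w)‖ ^ 2
      = 2 * (‖x - w‖ ^ 2 + ‖u - w‖ ^ 2) := by
    have := parallelogram_law_with_norm ℝ (x - w) (u - w)
    nlinarith [this]
  have hsub : (x - w) - (u - w) = x - u := by abel
  have hkey : ‖m - w‖ ^ 2 < ‖x - w‖ ^ 2 := by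
    have h1 : ‖m - w‖ ^ 2 = (1/4) * ‖(x - w) + (u - w)‖ ^ 2 := by
      rw [hmw, norm_smul, mul_pow, Real.norm_eq_abs]
      norm_num
    have h2 : ‖u - w‖ ^ 2 ≤ ‖x - w‖ ^ 2 := by
      have := norm_nonneg (u - w)
      nlinarith
    rw [hsub] at hpar
    nlinarith
  -- compare via hopt and hgle
  obtain ⟨r, hr⟩ : ∃ r : ℝ, g x = (r : EReal) :=
    ⟨(g x).toReal, (EReal.coe_toReal hgx (hgbot x)).symm⟩
  have hc : 0 < 1 / (2 * γ) := by positivity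
  have h1 := hopt m
  have h2 : g m ≤ g x := hgle m ⟨hmS, hmΩ⟩
  have h3 : ((1 / (2 * γ) * ‖x - w‖ ^ 2 : ℝ) : EReal) + g x
      ≤ ((1 / (2 * γ) * ‖m - w‖ ^ 2 : ℝ) : EReal) + g x :=
    h1.trans (add_le_add_right h2 _)
  rw [hr, ← EReal.coe_add, ← EReal.coe_add, EReal.coe_le_coe_iff] at h3
  nlinarith
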